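/- arXiv:2511.19944 — 3 statements merged into one kernel-verified Lean document; each statement's English description precedes it below -/
import Mathlib

section
/- The topological entropy of a subshift of finite type defined by a 0-1 adjacency matrix A (assumed irreducible) equals the logarithm of the spectral radius of A. -/
open Matrix BigOperators Filter

def IsZeroOne {n : ℕ} (A : Matrix (Fin n) (Fin n) ℝ) : Prop :=
  ∀ i j, A i j = 0 ∨ A i j = 1

def IsIrreducibleMat {n : ℕ} (A : Matrix (Fin n) (Fin n) ℝ) : Prop :=
  ∀ i j, ∃ k : ℕ, 1 ≤ k ∧ 0 < (A ^ k) i j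

/-- The spectral radius of a real matrix: the supremum of the absolute values of its
complex eigenvalues. -/
noncomputable def specRad {n : ℕ} (A : Matrix (Fin n) (Fin n) ℝ) : ℝ :=
  sSup {r : ℝ | ∃ z : ℂ, z ∈ spectrum ℂ (A.map (algebraMap ℝ ℂ)) ∧ r = ‖z‖}

/-- Number of admissible words of length `m+1` in the subshift of finite type
determined by the 0-1 matrix `A`. -/
noncomputable def wordCount {n : ℕ} (A : Matrix (Fin n) (Fin n) ℝ) (m : ℕ) : ℕ :=
  Nat.card {w : Fin (m+1) → Fin n // ∀ k : Fin m, A (w k.castSucc) (w k.succ) = 1}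

section SFTAux

attribute [local instance] Matrix.linftyOpNormedRing Matrix.linftyOpNormedAlgebra

variable {n : ℕ}

lemma SFT_sum_ite_last (A : Matrix (Fin n) (Fin n) ℝ) (m : ℕ) (j : Fin n) :
    ∑ w : Fin (m+1) → Fin n,
      (if w (Fin.last m) = j then ∏ k : Fin m, A (w k.castSucc) (w k.succ) else 0)
      = ∑ i, (A ^ m) i j := by
  induction m generalizing j with
  | zero =>
    rw [Fintype.sum_equiv (Equiv.funUnique (Fin 1) (Fin n)) _
      (fun x : Fin n => if x = j then (1:ℝ) else 0)
      (by intro w; simp [Equiv.funUnique, Fin.last])]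
    simp [Matrix.one_apply, eq_comm]
  | succ m ih =>
    rw [← Fintype.sum_equiv (Fin.snocEquiv (fun _ : Fin (m+2) => Fin n))
      (fun p : Fin n × (Fin (m+1) → Fin n) =>
        if p.1 = j then (∏ k : Fin m, A (p.2 k.castSucc) (p.2 k.succ)) * A (p.2 (Fin.last m)) p.1 else 0)
      _
      (by
        intro p
        obtain ⟨x, v⟩ := p
        simp only [Fin.snocEquiv_apply, Fin.snoc_last]
        rcases eq_or_ne x j with h | h
        · simp only [h, if_true]
          rw [Fin.prod_univ_castSucc]
          congr 1
          · apply Finset.prod_congr rfl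
            intro k _
            rw [Fin.succ_castSucc, Fin.snoc_castSucc, Fin.snoc_castSucc]
          · rw [Fin.succ_last, Fin.snoc_last, Fin.snoc_castSucc]
        · simp [h])]
    rw [Fintype.sum_prod_type]
    rw [Finset.sum_comm]
    have step1 : ∀ v : Fin (m+1) → Fin n,
        (∑ x : Fin n, if x = j then (∏ k : Fin m, A (v k.castSucc) (v k.succ)) * A (v (Fin.last m)) x else 0)
        = (∏ k : Fin m, A (v k.castSucc) (v k.succ)) * A (v (Fin.last m)) j := by
      intro v
      rw [Finset.sum_ite_eq' Finset.univ j]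
      simp
    simp only [step1]
    have step2 : ∀ v : Fin (m+1) → Fin n,
        (∏ k : Fin m, A (v k.castSucc) (v k.succ)) * A (v (Fin.last m)) j
        = ∑ l : Fin n, if v (Fin.last m) = l then (∏ k : Fin m, A (v k.castSucc) (v k.succ)) * A l j else 0 := by
      intro v
      rw [Finset.sum_ite_eq Finset.univ (v (Fin.last m))]
      simp
    simp only [step2]
    rw [Finset.sum_comm]
    have step3 : ∀ l : Fin n,
        (∑ v : Fin (m+1) → Fin n, if v (Fin.last m) = l then (∏ k : Fin m, A (v k.castSucc) (v k.succ)) * A l j else 0)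
        = (∑ i, (A ^ m) i l) * A l j := by
      intro l
      rw [← ih l, Finset.sum_mul]
      apply Finset.sum_congr rfl
      intro v _
      split_ifs <;> simp
    simp only [step3]
    simp only [pow_succ, Matrix.mul_apply]
    rw [Finset.sum_comm]
    apply Finset.sum_congr rfl
    intro x _
    rw [Finset.sum_mul]

lemma SFT_pow_entry_nonneg (A : Matrix (Fin n) (Fin n) ℝ) (h0 : ∀ i j, 0 ≤ A i j) (m : ℕ) :
    ∀ i j, 0 ≤ (A ^ m) i j := by
  induction m with
  | zero =>
    intro i j
    rw [pow_zero]
    by_cases h : i = j <;> simp [Matrix.one_apply, h]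
  | succ m ih =>
    intro i j
    rw [pow_succ, Matrix.mul_apply]
    exact Finset.sum_nonneg fun l _ => mul_nonneg (ih i l) (h0 l j)

lemma SFT_wordCount_eq_sum (A : Matrix (Fin n) (Fin n) ℝ) (h01 : IsZeroOne A) (m : ℕ) :
    (wordCount A m : ℝ) = ∑ i, ∑ j, (A ^ m) i j := by
  classical
  rw [wordCount, Nat.card_eq_fintype_card, Fintype.card_subtype, Finset.card_filter]
  push_cast
  have h1 : ∀ w : Fin (m+1) → Fin n,
      (if (∀ k : Fin m, A (w k.castSucc) (w k.succ) = 1) then (1:ℝ) else 0)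
      = ∏ k : Fin m, A (w k.castSucc) (w k.succ) := by
    intro w
    split_ifs with h
    · exact (Finset.prod_eq_one fun k _ => h k).symm
    · push_neg at h
      obtain ⟨k, hk⟩ := h
      have : A (w k.castSucc) (w k.succ) = 0 := (h01 _ _).resolve_right hk
      exact (Finset.prod_eq_zero (Finset.mem_univ k) this).symm
  simp only [h1]
  have h2 : ∀ w : Fin (m+1) → Fin n,
      (∏ k : Fin m, A (w k.castSucc) (w k.succ))
      = ∑ j : Fin n, if w (Fin.last m) = j then ∏ k : Fin m, A (w k.castSucc) (w k.succ) else 0 := by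
    intro w
    rw [Finset.sum_ite_eq Finset.univ (w (Fin.last m))]
    simp
  calc (∑ w : Fin (m+1) → Fin n, ∏ k : Fin m, A (w k.castSucc) (w k.succ))
      = ∑ w : Fin (m+1) → Fin n, ∑ j : Fin n,
          if w (Fin.last m) = j then ∏ k : Fin m, A (w k.castSucc) (w k.succ) else 0 :=
        Finset.sum_congr rfl fun w _ => h2 w
    _ = ∑ j : Fin n, ∑ w : Fin (m+1) → Fin n,
          if w (Fin.last m) = j then ∏ k : Fin m, A (w k.castSucc) (w k.succ) else 0 :=
        Finset.sum_comm
    _ = ∑ j : Fin n, ∑ i, (A ^ m) i j := Finset.sum_congr rfl fun j _ => SFT_sum_ite_last A m j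
    _ = ∑ i, ∑ j, (A ^ m) i j := Finset.sum_comm

lemma SFT_exists_pos_entry (A : Matrix (Fin n) (Fin n) ℝ) (h0 : ∀ i j, 0 ≤ A i j)
    (hirr : IsIrreducibleMat A) (hn : 0 < n) (m : ℕ) :
    0 < ∑ i, ∑ j, (A ^ m) i j := by
  have i0 : Fin n := ⟨0, hn⟩
  obtain ⟨k, hk1, hk⟩ := hirr i0 i0
  -- diagonal entries of A^(k*t) are positive
  have hdiag : ∀ t : ℕ, 0 < (A ^ (k * t)) i0 i0 := by
    intro t
    induction t with
    | zero => simp [Matrix.one_apply]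
    | succ t ih =>
      have : A ^ (k * (t+1)) = A ^ (k * t) * A ^ k := by
        rw [← pow_add]; ring_nf
      rw [this, Matrix.mul_apply]
      have hle : (A ^ (k*t)) i0 i0 * (A ^ k) i0 i0
          ≤ ∑ l, (A ^ (k*t)) i0 l * (A ^ k) l i0 :=
        Finset.single_le_sum (f := fun l => (A ^ (k*t)) i0 l * (A ^ k) l i0)
          (fun l _ => mul_nonneg (SFT_pow_entry_nonneg A h0 _ _ _) (SFT_pow_entry_nonneg A h0 _ _ _))
          (Finset.mem_univ i0)
      exact lt_of_lt_of_le (mul_pos ih hk) hle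
  -- A ^ m has a positive entry
  have hex : ∃ i j, 0 < (A ^ m) i j := by
    by_contra h
    push_neg at h
    have hzero : ∀ i j, (A ^ m) i j = 0 := fun i j =>
      le_antisymm (h i j) (SFT_pow_entry_nonneg A h0 m i j)
    have hm : k * m = m + (k * m - m) := by
      have : m ≤ k * m := Nat.le_mul_of_pos_left m hk1
      omega
    have := hdiag m
    rw [hm, pow_add, Matrix.mul_apply] at this
    simp only [hzero, zero_mul, Finset.sum_const_zero] at this
    exact lt_irrefl 0 this
  obtain ⟨i, j, hij⟩ := hex
  refine Finset.sum_pos' (fun i _ => Finset.sum_nonneg fun j _ => SFT_pow_entry_nonneg A h0 m i j)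
    ⟨i, Finset.mem_univ i, Finset.sum_pos' (fun j _ => SFT_pow_entry_nonneg A h0 m i j)
      ⟨j, Finset.mem_univ j, hij⟩⟩

lemma SFT_pow_map (A : Matrix (Fin n) (Fin n) ℝ) (m : ℕ) :
    (A.map (algebraMap ℝ ℂ)) ^ m = (A ^ m).map (algebraMap ℝ ℂ) := by
  have := map_pow ((algebraMap ℝ ℂ).mapMatrix (m := Fin n)) A m
  simpa [RingHom.mapMatrix_apply] using this.symm

lemma SFT_row_sum_norm (M : Matrix (Fin n) (Fin n) ℝ) (h0 : ∀ i j, 0 ≤ M i j) (i : Fin n) :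
    ((∑ j, ‖(M.map (algebraMap ℝ ℂ)) i j‖₊ : NNReal) : ℝ) = ∑ j, M i j := by
  push_cast
  apply Finset.sum_congr rfl
  intro j _
  simp only [Matrix.map_apply, coe_nnnorm]
  rw [show (algebraMap ℝ ℂ) (M i j) = (M i j : ℂ) from rfl, Complex.norm_real]
  exact abs_of_nonneg (h0 i j)

lemma SFT_norm_bounds (M : Matrix (Fin n) (Fin n) ℝ) (h0 : ∀ i j, 0 ≤ M i j) (hn : 0 < n) :
    ‖M.map (algebraMap ℝ ℂ)‖ ≤ (∑ i, ∑ j, M i j) ∧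
      (∑ i, ∑ j, M i j) ≤ n * ‖M.map (algebraMap ℝ ℂ)‖ := by
  have : Nonempty (Fin n) := ⟨⟨0, hn⟩⟩
  rw [Matrix.linfty_opNorm_def]
  obtain ⟨i₀, -, hi₀⟩ := Finset.exists_mem_eq_sup Finset.univ Finset.univ_nonempty
    (fun i : Fin n => ∑ j, ‖(M.map (algebraMap ℝ ℂ)) i j‖₊)
  rw [hi₀]
  constructor
  · rw [SFT_row_sum_norm M h0 i₀]
    exact Finset.single_le_sum (f := fun i => ∑ j, M i j)
      (fun i _ => Finset.sum_nonneg fun j _ => h0 i j) (Finset.mem_univ i₀)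
  · have hle : ∀ i : Fin n, ∑ j, M i j ≤ ∑ j, M i₀ j := by
      intro i
      rw [← SFT_row_sum_norm M h0 i, ← SFT_row_sum_norm M h0 i₀]
      have h := Finset.le_sup (f := fun i : Fin n => ∑ j, ‖(M.map (algebraMap ℝ ℂ)) i j‖₊)
        (Finset.mem_univ i)
      rw [hi₀] at h
      exact NNReal.coe_le_coe.mpr h
    rw [SFT_row_sum_norm M h0 i₀]
    calc (∑ i, ∑ j, M i j) ≤ ∑ _i : Fin n, ∑ j, M i₀ j := Finset.sum_le_sum fun i _ => hle i
      _ = n * ∑ j, M i₀ j := by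
          simp [Finset.sum_const, Finset.card_univ, nsmul_eq_mul]

lemma SFT_specRad_spec (A : Matrix (Fin n) (Fin n) ℝ) (hn : 0 < n) :
    ∃ z₀ : ℂ, z₀ ∈ spectrum ℂ (A.map (algebraMap ℝ ℂ)) ∧ specRad A = ‖z₀‖ ∧
      spectralRadius ℂ (A.map (algebraMap ℝ ℂ)) = (‖z₀‖₊ : ENNReal) := by
  have : Nonempty (Fin n) := ⟨⟨0, hn⟩⟩
  set B := A.map (algebraMap ℝ ℂ) with hB
  obtain ⟨z₀, hz₀, hmax'⟩ := (spectrum.isCompact B).exists_isMaxOn (spectrum.nonempty B)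
    continuous_norm.continuousOn
  have hmax : ∀ z ∈ spectrum ℂ B, ‖z‖ ≤ ‖z₀‖ := fun z hz => hmax' hz
  refine ⟨z₀, hz₀, ?_, ?_⟩
  · apply le_antisymm
    · apply csSup_le
      · exact ⟨‖z₀‖, ⟨z₀, hz₀, rfl⟩⟩
      · rintro r ⟨z, hz, rfl⟩
        exact hmax z hz
    · apply le_csSup
      · refine ⟨‖z₀‖, ?_⟩
        rintro r ⟨z, hz, rfl⟩
        exact hmax z hz
      · exact ⟨z₀, hz₀, rfl⟩
  · apply le_antisymm
    · apply iSup₂_le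
      intro z hz
      exact_mod_cast ENNReal.coe_le_coe.mpr (by
        rw [← NNReal.coe_le_coe, coe_nnnorm, coe_nnnorm]; exact hmax z hz)
    · exact le_iSup₂ (f := fun z (_ : z ∈ spectrum ℂ B) => (‖z‖₊ : ENNReal)) z₀ hz₀

lemma SFT_gelfand_real (A : Matrix (Fin n) (Fin n) ℝ) (hn : 0 < n) :
    Tendsto (fun m : ℕ => ‖(A.map (algebraMap ℝ ℂ)) ^ m‖ ^ (1/(m:ℝ))) atTop
      (nhds (specRad A)) := by
  obtain ⟨z₀, hz₀, hs1, hs2⟩ := SFT_specRad_spec A hn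
  set B := A.map (algebraMap ℝ ℂ) with hBdef
  have h := spectrum.pow_nnnorm_pow_one_div_tendsto_nhds_spectralRadius B
  rw [hs2] at h
  have h2 : Tendsto (fun m : ℕ => (‖B ^ m‖₊ ^ (1/(m:ℝ)) : NNReal)) atTop (nhds ‖z₀‖₊) := by
    rw [← ENNReal.tendsto_coe]
    convert h using 2 with m
    rw [ENNReal.coe_rpow_of_nonneg _ (by positivity)]
  have h3 := NNReal.tendsto_coe.mpr h2
  rw [hs1]
  have heq : (fun m : ℕ => ‖B ^ m‖ ^ (1/(m:ℝ))) = fun m : ℕ => ((‖B ^ m‖₊ ^ (1/(m:ℝ)) : NNReal) : ℝ) := by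
    funext m
    rw [NNReal.coe_rpow, coe_nnnorm]
  have habs : ‖z₀‖ = ((‖z₀‖₊ : NNReal) : ℝ) := by
    rw [coe_nnnorm]
  rw [heq, habs]
  exact h3

theorem SFT_main_pos (A : Matrix (Fin n) (Fin n) ℝ)
    (h01 : IsZeroOne A) (hirr : IsIrreducibleMat A) (hn : 0 < n) :
    Tendsto (fun m : ℕ => Real.log (wordCount A m) / (m + 1 : ℝ)) atTop
      (nhds (Real.log (specRad A))) := by
  have h0 : ∀ i j, 0 ≤ A i j := fun i j => by rcases h01 i j with h | h <;> rw [h] <;> norm_num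
  have hS1 : ∀ m, (1:ℝ) ≤ (wordCount A m : ℝ) := by
    intro m
    have h1 := SFT_exists_pos_entry A h0 hirr hn m
    rw [← SFT_wordCount_eq_sum A h01 m] at h1
    have hpos : 0 < wordCount A m := by exact_mod_cast h1
    exact_mod_cast Nat.one_le_iff_ne_zero.mpr hpos.ne'
  have hub : ∀ m, ‖(A.map (algebraMap ℝ ℂ)) ^ m‖ ≤ (wordCount A m : ℝ) := by
    intro m
    rw [SFT_wordCount_eq_sum A h01 m, SFT_pow_map]
    exact (SFT_norm_bounds (A ^ m) (SFT_pow_entry_nonneg A h0 m) hn).1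
  have hlb : ∀ m, (wordCount A m : ℝ) ≤ n * ‖(A.map (algebraMap ℝ ℂ)) ^ m‖ := by
    intro m
    rw [SFT_wordCount_eq_sum A h01 m, SFT_pow_map]
    exact (SFT_norm_bounds (A ^ m) (SFT_pow_entry_nonneg A h0 m) hn).2
  have hNlow : ∀ m, (1:ℝ)/n ≤ ‖(A.map (algebraMap ℝ ℂ)) ^ m‖ := by
    intro m
    rw [div_le_iff₀ (by exact_mod_cast hn)]
    calc (1:ℝ) ≤ (wordCount A m : ℝ) := hS1 m
      _ ≤ n * ‖(A.map (algebraMap ℝ ℂ)) ^ m‖ := hlb m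
      _ = ‖(A.map (algebraMap ℝ ℂ)) ^ m‖ * n := mul_comm _ _
  have hNpos : ∀ m, (0:ℝ) < ‖(A.map (algebraMap ℝ ℂ)) ^ m‖ := fun m =>
    lt_of_lt_of_le (by positivity) (hNlow m)
  have htendR := SFT_gelfand_real A hn
  have htend1 : Tendsto (fun m : ℕ => ((1:ℝ)/n) ^ (1/(m:ℝ))) atTop (nhds 1) := by
    have hcomp : Tendsto (fun m : ℕ => (1/(m:ℝ)) * Real.log (1/(n:ℝ))) atTop (nhds 0) := by
      simpa using tendsto_one_div_atTop_nhds_zero_nat.mul_const (Real.log (1/(n:ℝ)))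
    have hexp := (Real.continuous_exp.tendsto 0).comp hcomp
    rw [Real.exp_zero] at hexp
    refine hexp.congr fun m => ?_
    rw [Function.comp_apply, Real.rpow_def_of_pos (by positivity), mul_comm]
  have hρ1 : 1 ≤ specRad A := by
    refine le_of_tendsto_of_tendsto' htend1 htendR fun m => ?_
    exact Real.rpow_le_rpow (by positivity) (hNlow m) (by positivity)
  have hρpos : (0:ℝ) < specRad A := lt_of_lt_of_le one_pos hρ1
  have hlogN : Tendsto (fun m : ℕ => Real.log ‖(A.map (algebraMap ℝ ℂ)) ^ m‖ / m) atTop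
      (nhds (Real.log (specRad A))) := by
    have h2 := htendR.log hρpos.ne'
    refine h2.congr fun m => ?_
    rw [Real.log_rpow (hNpos m), one_div_mul_eq_div]
  have hupper : Tendsto
      (fun m : ℕ => (Real.log n + Real.log ‖(A.map (algebraMap ℝ ℂ)) ^ m‖) / m) atTop
      (nhds (Real.log (specRad A))) := by
    have h3 := (tendsto_const_div_atTop_nhds_zero_nat (Real.log n)).add hlogN
    rw [zero_add] at h3
    refine h3.congr fun m => ?_
    rw [add_div]
  have hmid : Tendsto (fun m : ℕ => Real.log (wordCount A m) / m) atTop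
      (nhds (Real.log (specRad A))) := by
    refine tendsto_of_tendsto_of_tendsto_of_le_of_le' hlogN hupper ?_ ?_
    · filter_upwards [eventually_ge_atTop 1] with m hm
      have hm' : (0:ℝ) < m := by exact_mod_cast hm
      gcongr
      · exact hNpos m
      · exact hub m
    · filter_upwards [eventually_ge_atTop 1] with m hm
      have hm' : (0:ℝ) < m := by exact_mod_cast hm
      gcongr
      · calc Real.log (wordCount A m)
            ≤ Real.log (n * ‖(A.map (algebraMap ℝ ℂ)) ^ m‖) := by
              apply Real.log_le_log (by linarith [hS1 m]) (hlb m)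
            _ = Real.log n + Real.log ‖(A.map (algebraMap ℝ ℂ)) ^ m‖ := by
              rw [Real.log_mul (by exact_mod_cast hn.ne') (hNpos m).ne']
  have hfrac : Tendsto (fun m : ℕ => (m:ℝ)/(m+1)) atTop (nhds 1) := by
    have := tendsto_natCast_div_add_atTop (𝕜 := ℝ) 1
    exact this
  have hprod := hmid.mul hfrac
  rw [mul_one] at hprod
  refine hprod.congr' ?_
  filter_upwards [eventually_ge_atTop 1] with m hm
  have hm' : (0:ℝ) < m := by exact_mod_cast hm
  field_simp

theorem SFT_main_zero (A : Matrix (Fin 0) (Fin 0) ℝ) :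
    Tendsto (fun m : ℕ => Real.log (wordCount A m) / (m + 1 : ℝ)) atTop
      (nhds (Real.log (specRad A))) := by
  have hwc : ∀ m, wordCount A m = 0 := by
    intro m
    have : IsEmpty {w : Fin (m+1) → Fin 0 // ∀ k : Fin m, A (w k.castSucc) (w k.succ) = 1} :=
      ⟨fun w => (w.1 0).elim0⟩
    exact Nat.card_of_isEmpty
  have hspec : specRad A = 0 := by
    haveI hsub : Subsingleton (Matrix (Fin 0) (Fin 0) ℂ) :=
      ⟨fun a b => by ext i j; exact i.elim0⟩
    have hempty : {r : ℝ | ∃ z : ℂ,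
        z ∈ spectrum ℂ (A.map (algebraMap ℝ ℂ)) ∧ r = ‖z‖} = ∅ := by
      ext r
      simp only [Set.mem_setOf_eq, Set.mem_empty_iff_false, iff_false]
      rintro ⟨z, hz, -⟩
      exact (spectrum.mem_iff.mp hz) (isUnit_of_subsingleton _)
    rw [specRad, hempty, Real.sSup_empty]
  simp only [hwc, hspec, Nat.cast_zero, Real.log_zero, zero_div]
  exact tendsto_const_nhds

end SFTAux

/-- The topological entropy of the subshift of finite type of an irreducible 0-1
matrix `A` (exponential growth rate of admissible words) equals `log (specRad A)`. -/
theorem sft_topological_entropy_eq_log_spectral_radius {n : ℕ}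
    (A : Matrix (Fin n) (Fin n) ℝ)
    (h01 : IsZeroOne A) (hirr : IsIrreducibleMat A) :
    Tendsto (fun m : ℕ => Real.log (wordCount A m) / (m + 1 : ℝ)) atTop
      (nhds (Real.log (specRad A))) := by
  rcases Nat.eq_zero_or_pos n with h | h
  · subst h
    exact SFT_main_zero A
  · exact SFT_main_pos A h01 hirr h
end

section
/- For any shift-invariant Markov measure on an irreducible subshift of finite type with adjacency matrix A, the measure-theoretic entropy (entropy rate) is at most log of the spectral radius of A, i.e., the entropy rate is at most the topological entropy. -/
open Matrix BigOperators

def IsStochastic {n : ℕ} (P : Matrix (Fin n) (Fin n) ℝ) : Prop :=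
  (∀ i j, 0 ≤ P i j) ∧ ∀ i, ∑ j, P i j = 1

def IsStationaryDist {n : ℕ} (P : Matrix (Fin n) (Fin n) ℝ) (μ : Fin n → ℝ) : Prop :=
  (∀ i, 0 ≤ μ i) ∧ (∑ i, μ i = 1) ∧ ∀ j, ∑ i, μ i * P i j = μ j

noncomputable def entropyRateFormula {n : ℕ} (P : Matrix (Fin n) (Fin n) ℝ)
    (μ : Fin n → ℝ) : ℝ :=
  -∑ i, μ i * ∑ j, P i j * Real.log (P i j)

/-! ### Auxiliary lemmas -/

lemma aux_pow_entry_nonneg {n : ℕ} {A : Matrix (Fin n) (Fin n) ℝ} (hA : ∀ i j, 0 ≤ A i j) :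
    ∀ (k : ℕ) (i j : Fin n), 0 ≤ (A ^ k) i j := by
  intro k
  induction k with
  | zero =>
    intro i j
    rw [pow_zero]
    by_cases h : i = j <;> simp [Matrix.one_apply, h]
  | succ k ih =>
    intro i j
    rw [pow_succ, Matrix.mul_apply]
    exact Finset.sum_nonneg fun t _ => mul_nonneg (ih i t) (hA t j)

lemma aux_gibbs_term {p q : ℝ} (hp : 0 ≤ p) (hq : 0 ≤ q) (h : 0 < p → 0 < q) :
    p * Real.log (q / p) ≤ q - p := by
  rcases hp.eq_or_lt with h0 | h0
  · simp [← h0, hq]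
  · have hq' := h h0
    have hlog := Real.log_le_sub_one_of_pos (div_pos hq' h0)
    have : p * Real.log (q / p) ≤ p * (q / p - 1) :=
      mul_le_mul_of_nonneg_left hlog h0.le
    calc p * Real.log (q / p) ≤ p * (q / p - 1) := this
      _ = q - p := by field_simp

lemma aux_entropy_le_log {n : ℕ} (A P : Matrix (Fin n) (Fin n) ℝ) (μ : Fin n → ℝ)
    (hA : ∀ i j, 0 ≤ A i j)
    (hP : IsStochastic P) (hcompat : ∀ i j, 0 < P i j → A i j = 1)
    (hμ : IsStationaryDist P μ) {l : ℝ} (hl : 0 < l)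
    (v : Fin n → ℝ) (hv : ∀ i, 0 < v i) (hsub : ∀ i, ∑ j, A i j * v j ≤ l * v i) :
    entropyRateFormula P μ ≤ Real.log l := by
  have key : ∀ i, -(∑ j, P i j * Real.log (P i j)) ≤
      Real.log l + Real.log (v i) - ∑ j, P i j * Real.log (v j) := by
    intro i
    set c := l * v i with hcdef
    have hc : 0 < c := mul_pos hl (hv i)
    have h1 : ∑ j, (P i j * Real.log (v j) - P i j * Real.log (P i j)
        - P i j * Real.log c) ≤ 0 := by
      have step1 : ∀ j : Fin n, P i j * Real.log (v j) - P i j * Real.log (P i j)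
          - P i j * Real.log c = P i j * Real.log (v j / (c * P i j)) := by
        intro j
        rcases (hP.1 i j).eq_or_lt with h0 | h0
        · simp [← h0]
        · rw [Real.log_div (hv j).ne' (by positivity), Real.log_mul hc.ne' h0.ne']
          ring
      have step2 : ∀ j : Fin n,
          P i j * Real.log (v j / (c * P i j)) ≤ A i j * v j / c - P i j := by
        intro j
        have hq : 0 ≤ A i j * v j / c := by
          have := hA i j; have := (hv j).le; positivity
        rcases (hP.1 i j).eq_or_lt with h0 | h0
        · rw [← h0]; simpa using hq
        · have hA1 := hcompat i j h0
          have harg : v j / (c * P i j) = (A i j * v j / c) / P i j := by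
            rw [hA1, one_mul, div_div]
          rw [harg]
          exact aux_gibbs_term h0.le hq (fun _ => by
            rw [hA1, one_mul]; exact div_pos (hv j) hc)
      calc ∑ j, (P i j * Real.log (v j) - P i j * Real.log (P i j) - P i j * Real.log c)
          = ∑ j, P i j * Real.log (v j / (c * P i j)) :=
            Finset.sum_congr rfl fun j _ => step1 j
        _ ≤ ∑ j, (A i j * v j / c - P i j) := Finset.sum_le_sum fun j _ => step2 j
        _ = (∑ j, A i j * v j) / c - 1 := by
            rw [Finset.sum_sub_distrib, ← Finset.sum_div, hP.2 i]
        _ ≤ (l * v i) / c - 1 := by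
            have := hsub i
            gcongr
        _ = 0 := by rw [← hcdef]; field_simp; norm_num
    have hsum1 : ∑ j, P i j * Real.log c = Real.log c := by
      rw [← Finset.sum_mul, hP.2 i, one_mul]
    have hlogc : Real.log c = Real.log l + Real.log (v i) :=
      Real.log_mul hl.ne' (hv i).ne'
    have h2 : ∑ j, P i j * Real.log (v j) - ∑ j, P i j * Real.log (P i j)
        - Real.log c ≤ 0 := by
      simpa [Finset.sum_sub_distrib, hsum1] using h1
    linarith
  have e0 : entropyRateFormula P μ = ∑ i, μ i * -(∑ j, P i j * Real.log (P i j)) := by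
    unfold entropyRateFormula
    rw [← Finset.sum_neg_distrib]
    exact Finset.sum_congr rfl fun i _ => (mul_neg _ _).symm
  rw [e0]
  have step : ∑ i, μ i * -(∑ j, P i j * Real.log (P i j)) ≤
      ∑ i, μ i * (Real.log l + Real.log (v i) - ∑ j, P i j * Real.log (v j)) :=
    Finset.sum_le_sum fun i _ => mul_le_mul_of_nonneg_left (key i) (hμ.1 i)
  refine le_trans step (le_of_eq ?_)
  have swap : ∑ i, μ i * ∑ j, P i j * Real.log (v j) = ∑ i, μ i * Real.log (v i) := by
    calc ∑ i, μ i * ∑ j, P i j * Real.log (v j)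
        = ∑ i, ∑ j, μ i * P i j * Real.log (v j) := by
          simp_rw [Finset.mul_sum, mul_assoc]
      _ = ∑ j, ∑ i, μ i * P i j * Real.log (v j) := Finset.sum_comm
      _ = ∑ j, (∑ i, μ i * P i j) * Real.log (v j) := by simp_rw [Finset.sum_mul]
      _ = ∑ j, μ j * Real.log (v j) := by
          refine Finset.sum_congr rfl fun j _ => ?_
          rw [hμ.2.2 j]
  simp_rw [mul_sub, mul_add]
  rw [Finset.sum_sub_distrib, Finset.sum_add_distrib, swap, ← Finset.sum_mul, hμ.2.1, one_mul]
  ring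

section WithNorm

attribute [local instance] Matrix.linftyOpNormedAddCommGroup Matrix.linftyOpNormedRing
  Matrix.linftyOpNormedAlgebra

lemma aux_bddAbove {n : ℕ} (A : Matrix (Fin n) (Fin n) ℝ) :
    BddAbove {r : ℝ | ∃ z : ℂ, z ∈ spectrum ℂ (A.map (algebraMap ℝ ℂ)) ∧ r = ‖z‖} := by
  refine ⟨‖A.map (algebraMap ℝ ℂ)‖ * ‖(1 : Matrix (Fin n) (Fin n) ℂ)‖, ?_⟩
  rintro r ⟨z, hz, rfl⟩
  have h := spectrum.norm_le_norm_mul_of_mem hz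
  exact h

lemma aux_specRad_nonneg {n : ℕ} (hn : 0 < n) (A : Matrix (Fin n) (Fin n) ℝ) :
    0 ≤ specRad A := by
  haveI : Nonempty (Fin n) := Fin.pos_iff_nonempty.mp hn
  haveI : CompleteSpace (Matrix (Fin n) (Fin n) ℂ) :=
    FiniteDimensional.complete ℂ (Matrix (Fin n) (Fin n) ℂ)
  obtain ⟨z, hz⟩ := spectrum.nonempty (A.map (algebraMap ℝ ℂ))
  exact le_trans (norm_nonneg z) (le_csSup (aux_bddAbove A) ⟨z, hz, rfl⟩)

lemma aux_row_sum_pow_le {n : ℕ} (A : Matrix (Fin n) (Fin n) ℝ)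
    (hA : ∀ i j, 0 ≤ A i j) {l : ℝ} (hl0 : 0 < l) (hl : specRad A < l) :
    ∃ m : ℕ, ∀ i, ∑ j, (A ^ (m + 1)) i j ≤ l ^ (m + 1) := by
  set a := A.map (algebraMap ℝ ℂ) with ha
  haveI : CompleteSpace (Matrix (Fin n) (Fin n) ℂ) :=
    FiniteDimensional.complete ℂ (Matrix (Fin n) (Fin n) ℂ)
  have hsr : spectralRadius ℂ a ≤ ENNReal.ofReal (specRad A) := by
    rw [spectralRadius]
    refine iSup₂_le fun z hz => ?_
    have h1 : ‖z‖ ≤ specRad A := le_csSup (aux_bddAbove A) ⟨z, hz, rfl⟩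
    rw [← ENNReal.ofReal_coe_nnreal, coe_nnnorm]
    exact ENNReal.ofReal_le_ofReal (by simpa using h1)
  have hlt : spectralRadius ℂ a < ENNReal.ofReal l :=
    lt_of_le_of_lt hsr (by rwa [ENNReal.ofReal_lt_ofReal_iff hl0])
  have hev := (spectrum.pow_norm_pow_one_div_tendsto_nhds_spectralRadius a).eventually_lt_const hlt
  obtain ⟨k, hk1, hk2⟩ := ((Filter.eventually_ge_atTop 1).and hev).exists
  have hkne : (k : ℝ) ≠ 0 := Nat.cast_ne_zero.mpr (by omega)
  have h1 : ‖a ^ k‖ ^ (1 / (k : ℝ)) < l := by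
    have := hk2
    rw [ENNReal.ofReal_lt_ofReal_iff hl0] at this
    exact this
  have hnorm : ‖a ^ k‖ ≤ l ^ k := by
    have heq : ‖a ^ k‖ = (‖a ^ k‖ ^ (1 / (k : ℝ))) ^ (k : ℝ) := by
      rw [← Real.rpow_mul (norm_nonneg _), one_div_mul_cancel hkne, Real.rpow_one]
    calc ‖a ^ k‖ = (‖a ^ k‖ ^ (1 / (k : ℝ))) ^ (k : ℝ) := heq
      _ ≤ l ^ (k : ℝ) :=
          Real.rpow_le_rpow (Real.rpow_nonneg (norm_nonneg _) _) h1.le (Nat.cast_nonneg k)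
      _ = l ^ k := Real.rpow_natCast l k
  obtain ⟨m, rfl⟩ : ∃ m, k = m + 1 := ⟨k - 1, by omega⟩
  refine ⟨m, fun i => ?_⟩
  have hmap : a ^ (m + 1) = (A ^ (m + 1)).map (algebraMap ℝ ℂ) := by
    rw [ha, ← RingHom.mapMatrix_apply, ← RingHom.mapMatrix_apply, map_pow]
  have hentry : ∀ t, ‖(a ^ (m + 1)) i t‖ = (A ^ (m + 1)) i t := by
    intro t
    rw [hmap]
    simp only [Matrix.map_apply]
    rw [show (algebraMap ℝ ℂ) ((A ^ (m + 1)) i t) = ((A ^ (m + 1)) i t : ℂ) from rfl,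
      Complex.norm_real]
    exact abs_of_nonneg (aux_pow_entry_nonneg hA (m + 1) i t)
  have hrow : ∑ t, (A ^ (m + 1)) i t ≤ ‖a ^ (m + 1)‖ := by
    rw [Matrix.linfty_opNorm_def]
    calc ∑ t, (A ^ (m + 1)) i t = ∑ t, ‖(a ^ (m + 1)) i t‖ := by
          exact Finset.sum_congr rfl fun t _ => (hentry t).symm
      _ = ((∑ t, ‖(a ^ (m + 1)) i t‖₊ : NNReal) : ℝ) := by push_cast; rfl
      _ ≤ _ := by
          exact_mod_cast NNReal.coe_le_coe.mpr
            (Finset.le_sup (f := fun i => ∑ t, ‖(a ^ (m + 1)) i t‖₊) (Finset.mem_univ i))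
  exact hrow.trans hnorm

end WithNorm

lemma aux_exists_subinv {n : ℕ} (A : Matrix (Fin n) (Fin n) ℝ)
    (hA : ∀ i j, 0 ≤ A i j) {l : ℝ} (hl0 : 0 < l) (hl : specRad A < l) :
    ∃ v : Fin n → ℝ, (∀ i, 0 < v i) ∧ ∀ i, ∑ j, A i j * v j ≤ l * v i := by
  obtain ⟨m, hm⟩ := aux_row_sum_pow_le A hA hl0 hl
  set S : Fin n → ℕ → ℝ := fun i k => ∑ t, (A ^ k) i t with hS
  have hS0 : ∀ i, S i 0 = 1 := by
    intro i
    simp [hS, Matrix.one_apply]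
  have hSnn : ∀ i k, 0 ≤ S i k := fun i k =>
    Finset.sum_nonneg fun t _ => aux_pow_entry_nonneg hA k i t
  refine ⟨fun i => ∑ k ∈ Finset.range (m + 1), (1 / l) ^ k * S i k, ?_, ?_⟩
  · intro i
    have h0 : (1 : ℝ) ≤ ∑ k ∈ Finset.range (m + 1), (1 / l) ^ k * S i k := by
      have := Finset.single_le_sum (f := fun k => (1 / l) ^ k * S i k)
        (fun k _ => mul_nonneg (by positivity) (hSnn i k))
        (Finset.mem_range.mpr (Nat.succ_pos m))
      simpa [hS0 i] using this
    linarith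
  · intro i
    have hC1 : ∀ k, ∑ j, A i j * S j k = S i (k + 1) := by
      intro k
      calc ∑ j, A i j * S j k = ∑ j, ∑ t, A i j * (A ^ k) j t := by
            simp_rw [hS, Finset.mul_sum]
        _ = ∑ t, ∑ j, A i j * (A ^ k) j t := Finset.sum_comm
        _ = ∑ t, (A ^ (k + 1)) i t := by
            refine Finset.sum_congr rfl fun t _ => ?_
            rw [pow_succ', Matrix.mul_apply]
        _ = S i (k + 1) := rfl
    have lhs_eq : ∑ j, A i j * (∑ k ∈ Finset.range (m + 1), (1 / l) ^ k * S j k)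
        = ∑ k ∈ Finset.range (m + 1), (1 / l) ^ k * S i (k + 1) := by
      calc ∑ j, A i j * (∑ k ∈ Finset.range (m + 1), (1 / l) ^ k * S j k)
          = ∑ j, ∑ k ∈ Finset.range (m + 1), A i j * ((1 / l) ^ k * S j k) := by
            simp_rw [Finset.mul_sum]
        _ = ∑ k ∈ Finset.range (m + 1), ∑ j, A i j * ((1 / l) ^ k * S j k) :=
            Finset.sum_comm
        _ = ∑ k ∈ Finset.range (m + 1), (1 / l) ^ k * ∑ j, A i j * S j k := by
            refine Finset.sum_congr rfl fun k _ => ?_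
            rw [Finset.mul_sum]
            exact Finset.sum_congr rfl fun j _ => by ring
        _ = _ := by simp_rw [hC1]
    rw [lhs_eq]
    have rhs_eq : l * ∑ k ∈ Finset.range (m + 1), (1 / l) ^ k * S i k
        = (∑ k ∈ Finset.range m, (1 / l) ^ k * S i (k + 1)) + l := by
      rw [Finset.mul_sum, Finset.sum_range_succ']
      congr 1
      · refine Finset.sum_congr rfl fun k _ => ?_
        rw [pow_succ]
        field_simp
      · simp [hS0 i]
    rw [rhs_eq, Finset.sum_range_succ]
    have last : (1 / l) ^ m * S i (m + 1) ≤ l := by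
      have h := hm i
      have hpm : (0 : ℝ) < l ^ m := pow_pos hl0 m
      rw [div_pow, one_pow, div_mul_eq_mul_div, one_mul, div_le_iff₀ hpm]
      calc S i (m + 1) ≤ l ^ (m + 1) := h
        _ = l * l ^ m := by rw [pow_succ]; ring
    linarith

/-- The entropy rate of any shift-invariant Markov measure compatible with an
irreducible 0-1 matrix `A` is at most the topological entropy `log (specRad A)`. -/
theorem markov_entropy_rate_le_topological_entropy {n : ℕ}
    (A P : Matrix (Fin n) (Fin n) ℝ) (μ : Fin n → ℝ)
    (h01 : IsZeroOne A) (hirr : IsIrreducibleMat A)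
    (hP : IsStochastic P)
    (hcompat : ∀ i j, 0 < P i j → A i j = 1)
    (hμ : IsStationaryDist P μ) :
    entropyRateFormula P μ ≤ Real.log (specRad A) := by
  rcases Nat.eq_zero_or_pos n with hn | hn
  · subst hn
    have := hμ.2.1
    simp at this
  have hA : ∀ i j, 0 ≤ A i j := fun i j => by
    rcases h01 i j with h | h <;> rw [h] <;> norm_num
  have hρ0 : 0 ≤ specRad A := aux_specRad_nonneg hn A
  have hbound : ∀ l : ℝ, specRad A < l → entropyRateFormula P μ ≤ Real.log l := by
    intro l hl
    have hl0 : 0 < l := lt_of_le_of_lt hρ0 hl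
    obtain ⟨v, hv, hsub⟩ := aux_exists_subinv A hA hl0 hl
    exact aux_entropy_le_log A P μ hA hP hcompat hμ hl0 v hv hsub
  have hρpos : 0 < specRad A := by
    rcases hρ0.eq_or_lt with h0 | h0
    · exfalso
      set l := Real.exp (entropyRateFormula P μ - 1) with hldef
      have hl : specRad A < l := by rw [← h0]; exact Real.exp_pos _
      have := hbound l hl
      rw [hldef, Real.log_exp] at this
      linarith
    · exact h0
  have htend : Filter.Tendsto (fun k : ℕ => Real.log (specRad A + 1 / (k + 1)))
      Filter.atTop (nhds (Real.log (specRad A))) := by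
    have h1 : Filter.Tendsto (fun k : ℕ => specRad A + 1 / (k + 1))
        Filter.atTop (nhds (specRad A + 0)) :=
      Filter.Tendsto.add tendsto_const_nhds tendsto_one_div_add_atTop_nhds_zero_nat
    rw [add_zero] at h1
    exact ((Real.continuousAt_log hρpos.ne').tendsto).comp h1
  refine ge_of_tendsto' htend fun k => ?_
  refine hbound _ ?_
  have : (0 : ℝ) < 1 / ((k : ℝ) + 1) := by positivity
  linarith
end

section
/- Among all Markov measures compatible with an irreducible 0-1 matrix A, the maximal entropy rate log ρ(A) is achieved by the Parry measure, i.e., the stochastic matrix P_{ij} = A_{ij} v_j / (ρ(A) v_i), where v is a right Perron eigenvector of A. -/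
open Matrix BigOperators

/-- Entries of powers of an entrywise-nonnegative matrix are nonnegative. -/
lemma parry_pow_entry_nonneg {n : ℕ} (A : Matrix (Fin n) (Fin n) ℝ)
    (hA : ∀ i j, 0 ≤ A i j) : ∀ k i j, 0 ≤ (A ^ k) i j := by
  intro k
  induction k with
  | zero =>
    intro i j
    by_cases h : i = j <;> simp [Matrix.one_apply, h]
  | succ k ih =>
    intro i j
    rw [pow_succ, Matrix.mul_apply]
    exact Finset.sum_nonneg fun l _ => mul_nonneg (ih i l) (hA l j)

/-- Each row of an irreducible nonnegative matrix has a positive entry. -/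
lemma parry_row_pos {n : ℕ} (A : Matrix (Fin n) (Fin n) ℝ)
    (hA : ∀ i j, 0 ≤ A i j) (hirr : IsIrreducibleMat A) (i : Fin n) :
    ∃ j, 0 < A i j := by
  obtain ⟨k, hk1, hk⟩ := hirr i i
  obtain ⟨m, rfl⟩ : ∃ m, k = m + 1 := ⟨k - 1, (Nat.succ_pred_eq_of_pos hk1).symm⟩
  rw [pow_succ', Matrix.mul_apply] at hk
  by_contra h
  push_neg at h
  have hz : ∀ j ∈ Finset.univ, A i j * (A ^ m) j i = 0 := fun j _ =>
    mul_eq_zero_of_left (le_antisymm (h j) (hA i j)) _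
  rw [Finset.sum_eq_zero hz] at hk
  exact lt_irrefl 0 hk

/-- Key computation: for any stochastic `Q` with stationary distribution `ν`,
the average of `log (v j) - log (v i) - log ρ` is `- log ρ`. -/
lemma parry_S_eq {n : ℕ} (v : Fin n → ℝ) (ρ : ℝ) (Q : Matrix (Fin n) (Fin n) ℝ)
    (ν : Fin n → ℝ) (hQ : IsStochastic Q) (hν : IsStationaryDist Q ν) :
    ∑ i, ν i * ∑ j, Q i j * (Real.log (v j) - Real.log (v i) - Real.log ρ)
      = -Real.log ρ := by
  have h1 : ∀ i, ∑ j, Q i j * (Real.log (v j) - Real.log (v i) - Real.log ρ)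
      = (∑ j, Q i j * Real.log (v j)) - Real.log (v i) - Real.log ρ := by
    intro i
    have : ∑ j, Q i j * (Real.log (v j) - Real.log (v i) - Real.log ρ)
        = (∑ j, Q i j * Real.log (v j))
          - (∑ j, Q i j) * (Real.log (v i) + Real.log ρ) := by
      rw [Finset.sum_mul, ← Finset.sum_sub_distrib]
      exact Finset.sum_congr rfl fun j _ => by ring
    rw [this, hQ.2 i]
    ring
  have hswap : ∑ i, ν i * ∑ j, Q i j * Real.log (v j)
      = ∑ j, ν j * Real.log (v j) := by
    calc ∑ i, ν i * ∑ j, Q i j * Real.log (v j)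
        = ∑ i, ∑ j, ν i * Q i j * Real.log (v j) := by
          exact Finset.sum_congr rfl fun i _ => by
            rw [Finset.mul_sum]; exact Finset.sum_congr rfl fun j _ => by ring
      _ = ∑ j, ∑ i, ν i * Q i j * Real.log (v j) := Finset.sum_comm
      _ = ∑ j, (∑ i, ν i * Q i j) * Real.log (v j) := by
          exact Finset.sum_congr rfl fun j _ => by rw [Finset.sum_mul]
      _ = ∑ j, ν j * Real.log (v j) := by
          exact Finset.sum_congr rfl fun j _ => by rw [hν.2.2 j]
  calc ∑ i, ν i * ∑ j, Q i j * (Real.log (v j) - Real.log (v i) - Real.log ρ)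
      = ∑ i, (ν i * ∑ j, Q i j * Real.log (v j)
          - ν i * Real.log (v i) - ν i * Real.log ρ) := by
        exact Finset.sum_congr rfl fun i _ => by rw [h1 i]; ring
    _ = (∑ i, ν i * ∑ j, Q i j * Real.log (v j)) - (∑ i, ν i * Real.log (v i))
          - (∑ i, ν i) * Real.log ρ := by
        rw [Finset.sum_mul, ← Finset.sum_sub_distrib, ← Finset.sum_sub_distrib]
    _ = -Real.log ρ := by rw [hswap, hν.2.1]; ring

/-- The Parry measure: given an irreducible 0-1 matrix `A` with positive right Perron
eigenvector `v` (so `A *ᵥ v = specRad A • v`), the stochastic matrix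
`P i j = A i j * v j / (specRad A * v i)` is compatible with `A`, its entropy rate is
exactly `log (specRad A)`, and this is maximal among all Markov measures compatible
with `A`. -/
theorem parry_measure_maximal_entropy {n : ℕ}
    (A : Matrix (Fin n) (Fin n) ℝ) (v : Fin n → ℝ)
    (h01 : IsZeroOne A) (hirr : IsIrreducibleMat A)
    (hv : ∀ i, 0 < v i) (heig : A *ᵥ v = specRad A • v)
    (P : Matrix (Fin n) (Fin n) ℝ)
    (hPdef : ∀ i j, P i j = A i j * v j / (specRad A * v i)) :
    IsStochastic P ∧ (∀ i j, 0 < P i j → A i j = 1) ∧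
      (∀ μ : Fin n → ℝ, IsStationaryDist P μ →
        entropyRateFormula P μ = Real.log (specRad A)) ∧
      (∀ Q : Matrix (Fin n) (Fin n) ℝ, ∀ ν : Fin n → ℝ,
        IsStochastic Q → (∀ i j, 0 < Q i j → A i j = 1) → IsStationaryDist Q ν →
        entropyRateFormula Q ν ≤ Real.log (specRad A)) := by
  set ρ := specRad A with hρdef
  have hA : ∀ i j, 0 ≤ A i j := fun i j => by
    rcases h01 i j with h | h <;> simp [h]
  -- row sums of A against v
  have hrow : ∀ i, ∑ j, A i j * v j = ρ * v i := by
    intro i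
    have := congrFun heig i
    simpa [Matrix.mulVec, dotProduct] using this
  -- spectral radius is positive (whenever an index exists)
  have hρpos : ∀ _ : Fin n, 0 < ρ := by
    intro i
    obtain ⟨j0, hj0⟩ := parry_row_pos A hA hirr i
    have hsum : 0 < ∑ j, A i j * v j :=
      Finset.sum_pos' (fun j _ => mul_nonneg (hA i j) (hv j).le)
        ⟨j0, Finset.mem_univ _, mul_pos hj0 (hv j0)⟩
    rw [hrow i] at hsum
    nlinarith [hv i]
  -- P is stochastic
  have hPnonneg : ∀ i j, 0 ≤ P i j := by
    intro i j
    rw [hPdef]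
    exact div_nonneg (mul_nonneg (hA i j) (hv j).le)
      (mul_pos (hρpos i) (hv i)).le
  have hProw : ∀ i, ∑ j, P i j = 1 := by
    intro i
    calc ∑ j, P i j = ∑ j, A i j * v j / (ρ * v i) :=
          Finset.sum_congr rfl fun j _ => hPdef i j
      _ = (∑ j, A i j * v j) / (ρ * v i) := by rw [← Finset.sum_div]
      _ = 1 := by rw [hrow i]; exact div_self (mul_pos (hρpos i) (hv i)).ne'
  have hPstoch : IsStochastic P := ⟨hPnonneg, hProw⟩
  -- compatibility
  have hPcompat : ∀ i j, 0 < P i j → A i j = 1 := by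
    intro i j hp
    rcases h01 i j with h | h
    · rw [hPdef, h] at hp; simp at hp
    · exact h
  -- value of P on positive entries
  have hPval : ∀ i j, A i j = 1 → P i j = v j / (ρ * v i) := by
    intro i j h
    rw [hPdef, h, one_mul]
  -- log of P on positive entries
  have hPlog : ∀ i j, A i j = 1 →
      Real.log (P i j) = Real.log (v j) - Real.log (v i) - Real.log ρ := by
    intro i j h
    rw [hPval i j h, Real.log_div (hv j).ne' (mul_pos (hρpos i) (hv i)).ne',
      Real.log_mul (hρpos i).ne' (hv i).ne']
    ring
  refine ⟨hPstoch, hPcompat, ?_, ?_⟩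
  · -- entropy of the Parry measure
    intro μ hμ
    have hpt : ∀ i j, P i j * Real.log (P i j)
        = P i j * (Real.log (v j) - Real.log (v i) - Real.log ρ) := by
      intro i j
      rcases h01 i j with h | h
      · have : P i j = 0 := by rw [hPdef, h]; simp
        rw [this]; ring
      · rw [hPlog i j h]
    have S := parry_S_eq v ρ P μ hPstoch hμ
    calc entropyRateFormula P μ
        = -∑ i, μ i * ∑ j, P i j * (Real.log (v j) - Real.log (v i) - Real.log ρ) := by
          rw [entropyRateFormula]
          congr 1
          exact Finset.sum_congr rfl fun i _ => by
            congr 1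
            exact Finset.sum_congr rfl fun j _ => hpt i j
      _ = Real.log ρ := by rw [S]; ring
  · -- maximality
    intro Q ν hQ hQA hν
    -- n > 0 since ν is a probability vector
    have hn : Nonempty (Fin n) := by
      by_contra h
      rw [not_nonempty_iff] at h
      have := hν.2.1
      rw [Finset.univ_eq_empty, Finset.sum_empty] at this
      norm_num at this
    obtain ⟨i0⟩ := hn
    have hρ0 : 0 < ρ := hρpos i0
    have S := parry_S_eq v ρ Q ν hQ hν
    -- pointwise bound
    have hterm : ∀ i j,
        Q i j * (Real.log (v j) - Real.log (v i) - Real.log ρ)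
          - Q i j * Real.log (Q i j) ≤ P i j - Q i j := by
      intro i j
      rcases eq_or_lt_of_le (hQ.1 i j) with hq | hq
      · rw [← hq]; simpa using hPnonneg i j
      · have hA1 : A i j = 1 := hQA i j hq
        have hPpos : 0 < P i j := by
          rw [hPval i j hA1]
          exact div_pos (hv j) (mul_pos hρ0 (hv i))
        have llog : Real.log (v j) - Real.log (v i) - Real.log ρ - Real.log (Q i j)
            = Real.log (P i j / Q i j) := by
          rw [Real.log_div hPpos.ne' hq.ne', hPlog i j hA1]
        have hle : Real.log (P i j / Q i j) ≤ P i j / Q i j - 1 :=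
          Real.log_le_sub_one_of_pos (div_pos hPpos hq)
        calc Q i j * (Real.log (v j) - Real.log (v i) - Real.log ρ)
              - Q i j * Real.log (Q i j)
            = Q i j * (Real.log (v j) - Real.log (v i) - Real.log ρ
                - Real.log (Q i j)) := by ring
          _ = Q i j * Real.log (P i j / Q i j) := by rw [llog]
          _ ≤ Q i j * (P i j / Q i j - 1) := by
              exact mul_le_mul_of_nonneg_left hle hq.le
          _ = P i j - Q i j := by field_simp
    -- row sums of the bound vanish
    have hTrow : ∀ i, ∑ j, (Q i j * (Real.log (v j) - Real.log (v i) - Real.log ρ)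
        - Q i j * Real.log (Q i j)) ≤ 0 := by
      intro i
      calc ∑ j, (Q i j * (Real.log (v j) - Real.log (v i) - Real.log ρ)
              - Q i j * Real.log (Q i j))
          ≤ ∑ j, (P i j - Q i j) := Finset.sum_le_sum fun j _ => hterm i j
        _ = (∑ j, P i j) - ∑ j, Q i j := Finset.sum_sub_distrib _ _
        _ = 0 := by rw [hProw i, hQ.2 i]; ring
    -- assemble
    have key : entropyRateFormula Q ν - Real.log ρ
        = ∑ i, ν i * ∑ j, (Q i j * (Real.log (v j) - Real.log (v i) - Real.log ρ)
            - Q i j * Real.log (Q i j)) := by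
      have expand : ∑ i, ν i * ∑ j, (Q i j * (Real.log (v j) - Real.log (v i)
              - Real.log ρ) - Q i j * Real.log (Q i j))
          = (∑ i, ν i * ∑ j, Q i j * (Real.log (v j) - Real.log (v i) - Real.log ρ))
            - ∑ i, ν i * ∑ j, Q i j * Real.log (Q i j) := by
        rw [← Finset.sum_sub_distrib]
        exact Finset.sum_congr rfl fun i _ => by
          rw [Finset.sum_sub_distrib, mul_sub]
      rw [expand, S, entropyRateFormula]
      ring
    have hsum : ∑ i, ν i * ∑ j, (Q i j * (Real.log (v j) - Real.log (v i)
        - Real.log ρ) - Q i j * Real.log (Q i j)) ≤ 0 :=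
      Finset.sum_nonpos fun i _ =>
        mul_nonpos_of_nonneg_of_nonpos (hν.1 i) (hTrow i)
    linarith [key, hsum]
end
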